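/- Let p : E → B be a G-fibration with parametrized endpoint G-fibration Π : E^I_B → E ×_B E, Π(γ) = (γ(0), γ(1)). For a G-invariant subset U of E ×_B E, the following are equivalent: (1) there exists a G-equivariant section of Π over U; (2) the inclusion U ↪ E ×_B E is G-homotopic to a G-map f : U → E ×_B E taking values in the diagonal Δ(E). -/

import Mathlib

/-- `p` is a `G`-fibration: `G`-equivariant homotopy lifting property for all `G`-spaces. -/
def IsGFibration (G : Type) [Group G] [TopologicalSpace G]
    {E B : Type} [TopologicalSpace E] [TopologicalSpace B]
    [MulAction G E] [MulAction G B] (p : E → B) : Prop :=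
  ∀ (X : Type) (_ : TopologicalSpace X) (_ : MulAction G X) (_ : ContinuousSMul G X)
    (H : X × unitInterval → B) (h : X → E),
      Continuous H → (∀ (g : G) (x : X) (t : unitInterval), H (g • x, t) = g • H (x, t)) →
      Continuous h → (∀ (g : G) (x : X), h (g • x) = g • h x) →
      (∀ x : X, p (h x) = H (x, 0)) →
      ∃ Ht : X × unitInterval → E, Continuous Ht ∧
        (∀ (g : G) (x : X) (t : unitInterval), Ht (g • x, t) = g • Ht (x, t)) ∧
        (∀ (x : X) (t : unitInterval), p (Ht (x, t)) = H (x, t)) ∧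
        (∀ x : X, Ht (x, 0) = h x)

/-- Let `p : E → B` be a `G`-fibration with parametrized endpoint
`G`-fibration `Π : E^I_B → E ×_B E`, `Π(γ) = (γ(0), γ(1))`.  For a `G`-invariant subset
`U` of `E ×_B E`, there is a `G`-equivariant section of `Π` over `U` if and only if the
inclusion `U ↪ E ×_B E` is `G`-homotopic to a `G`-map with values in the diagonal
`Δ(E)`. -/
theorem equivariant_parametrized_section_iff_compressible
    (G : Type) [Group G] [TopologicalSpace G]
    {E B : Type} [TopologicalSpace E] [TopologicalSpace B]
    [MulAction G E] [ContinuousSMul G E] [MulAction G B] [ContinuousSMul G B]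
    (p : E → B) (hpc : Continuous p)
    (hequiv : ∀ (g : G) (e : E), p (g • e) = g • p e)
    (hfib : IsGFibration G p)
    (U : Set (E × E))
    (hUsub : U ⊆ {z : E × E | p z.1 = p z.2})
    (hUinv : ∀ (g : G) (z : E × E), z ∈ U → (g • z.1, g • z.2) ∈ U) :
    -- (1) a `G`-equivariant section of `Π` over `U`
    (∃ s : U → C(unitInterval, E), Continuous s ∧
        (∀ u : U, ∃ b : B, ∀ t : unitInterval, p (s u t) = b) ∧
        (∀ u : U, s u 0 = u.1.1 ∧ s u 1 = u.1.2) ∧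
        (∀ (g : G) (u : U) (t : unitInterval),
          s ⟨(g • u.1.1, g • u.1.2), hUinv g u.1 u.2⟩ t = g • s u t))
    ↔
    -- (2) a `G`-homotopy in `E ×_B E` from the inclusion of `U` to a map into `Δ(E)`
    (∃ F : U × unitInterval → E × E, Continuous F ∧
        (∀ (u : U) (t : unitInterval), p (F (u, t)).1 = p (F (u, t)).2) ∧
        (∀ (g : G) (u : U) (t : unitInterval),
          F (⟨(g • u.1.1, g • u.1.2), hUinv g u.1 u.2⟩, t) = (g • (F (u, t)).1, g • (F (u, t)).2)) ∧
        (∀ u : U, F (u, 0) = u.1) ∧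
        (∀ u : U, (F (u, 1)).1 = (F (u, 1)).2)) := by
  constructor
  · -- (1) → (2)
    rintro ⟨s, hsc, hsf, hse, hsG⟩
    refine ⟨fun x => (s x.1 x.2, x.1.1.2), ?_, ?_, ?_, ?_, ?_⟩
    · exact (continuous_eval.comp (hsc.prodMap continuous_id)).prodMk
        ((continuous_subtype_val.comp continuous_fst).snd)
    · intro u t
      obtain ⟨bu, hbu⟩ := hsf u
      show p (s u t) = p u.1.2
      rw [hbu t, ← hbu 1, (hse u).2]
    · intro g u t
      exact Prod.ext (hsG g u t) rfl
    · intro u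
      show (s u 0, u.1.2) = u.1
      rw [(hse u).1]
    · intro u
      exact (hse u).2
  · -- (2) → (1)
    rintro ⟨F, hFc, hFp, hFG, hF0, hF1⟩
    classical
    set q : ℝ → unitInterval := Set.projIcc 0 1 zero_le_one with hqdef
    have hqc : Continuous q := continuous_projIcc
    have hq0 : q 0 = 0 := Set.projIcc_left zero_le_one
    have hcoe : Continuous (fun t : unitInterval => (t : ℝ)) := continuous_subtype_val
    -- group actions
    letI : SMul G U := ⟨fun g u => ⟨(g • u.1.1, g • u.1.2), hUinv g u.1 u.2⟩⟩
    have hsmulU : ∀ (g : G) (u : U),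
        g • u = (⟨(g • u.1.1, g • u.1.2), hUinv g u.1 u.2⟩ : U) := fun _ _ => rfl
    letI : MulAction G U :=
      { one_smul := fun u => Subtype.ext (by
          show ((1 : G) • u.1.1, (1 : G) • u.1.2) = u.1
          simp
        )
        mul_smul := fun g₁ g₂ u => Subtype.ext (by
          show ((g₁ * g₂) • u.1.1, (g₁ * g₂) • u.1.2)
            = (g₁ • (g₂ • u.1.1), g₁ • (g₂ • u.1.2))
          simp [mul_smul]
        ) }
    letI : ContinuousSMul G U := ⟨by
      apply Continuous.subtype_mk
      exact (continuous_fst.smul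
        ((continuous_subtype_val.comp continuous_snd).fst)).prodMk
        (continuous_fst.smul ((continuous_subtype_val.comp continuous_snd).snd))⟩
    letI : SMul G unitInterval := ⟨fun _ t => t⟩
    letI : MulAction G unitInterval :=
      { one_smul := fun _ => rfl, mul_smul := fun _ _ _ => rfl }
    letI : ContinuousSMul G unitInterval := ⟨continuous_snd⟩
    -- reparametrizations
    set σ₁ : unitInterval → unitInterval := fun s => q (2 * s) with hσ₁
    set σ₂ : unitInterval → unitInterval := fun s => q (2 - 2 * s) with hσ₂
    set τ : unitInterval → unitInterval := fun s => q (min (2 * s) (2 - 2 * s)) with hτ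
    set φ : unitInterval → unitInterval := fun t => q (3 * t - 1) with hφ
    set ψ : unitInterval → unitInterval := fun t => q (min (3 * t) (3 - 3 * t)) with hψ
    have hσ₁c : Continuous σ₁ := hqc.comp (continuous_const.mul hcoe)
    have hσ₂c : Continuous σ₂ := hqc.comp (continuous_const.sub (continuous_const.mul hcoe))
    have hτc : Continuous τ := hqc.comp ((continuous_const.mul hcoe).min
      (continuous_const.sub (continuous_const.mul hcoe)))
    have hφc : Continuous φ := hqc.comp ((continuous_const.mul hcoe).sub continuous_const)
    have hψc : Continuous ψ := hqc.comp ((continuous_const.mul hcoe).min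
      (continuous_const.sub (continuous_const.mul hcoe)))
    -- the "whisker" initial map and the homotopy to be lifted
    set c : U × unitInterval → E := fun x =>
      if ((x.2 : ℝ)) ≤ 1 / 2 then (F (x.1, σ₁ x.2)).1 else (F (x.1, σ₂ x.2)).2 with hc
    set H : (U × unitInterval) × unitInterval → B := fun x =>
      p ((F (x.1.1, q ((τ x.1.2 : ℝ) * (1 - (x.2 : ℝ))))).1) with hH
    have hτ₁ : ∀ s : unitInterval, (s : ℝ) ≤ 1 / 2 → τ s = σ₁ s := by
      intro s hs
      rw [hτ, hσ₁]
      simp only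
      congr 1
      rw [min_eq_left (by linarith)]
    have hτ₂ : ∀ s : unitInterval, 1 / 2 ≤ (s : ℝ) → τ s = σ₂ s := by
      intro s hs
      rw [hτ, hσ₂]
      simp only
      congr 1
      rw [min_eq_right (by linarith)]
    have hHc : Continuous H := by
      apply hpc.comp
      apply Continuous.fst
      apply hFc.comp
      refine (continuous_fst.fst).prodMk (hqc.comp ?_)
      exact ((hcoe.comp (hτc.comp continuous_fst.snd)).mul
        (continuous_const.sub (hcoe.comp continuous_snd)))
    have hcc : Continuous c := by
      rw [hc]
      apply Continuous.if_le
      · exact (hFc.comp (continuous_fst.prodMk (hσ₁c.comp continuous_snd))).fst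
      · exact (hFc.comp (continuous_fst.prodMk (hσ₂c.comp continuous_snd))).snd
      · exact hcoe.comp continuous_snd
      · exact continuous_const
      · intro x hx
        have h1 : σ₁ x.2 = 1 := by
          rw [hσ₁]; simp only
          rw [hx]
          norm_num [hqdef]
        have h2 : σ₂ x.2 = 1 := by
          rw [hσ₂]; simp only
          rw [hx]
          norm_num [hqdef]
        rw [h1, h2]
        exact hF1 x.1
    -- compatibility and equivariance for the lifting problem
    have hHG : ∀ (g : G) (x : U × unitInterval) (t : unitInterval),
        H (g • x, t) = g • H (x, t) := by
      intro g x t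
      rw [hH]
      simp only
      have hx1 : (g • x).1 = g • x.1 := rfl
      have hx2 : ((g • x).2 : unitInterval) = x.2 := rfl
      rw [hx1, hx2, hsmulU, hFG, hequiv]
    have hcG : ∀ (g : G) (x : U × unitInterval), c (g • x) = g • c x := by
      intro g x
      rw [hc]
      simp only
      have hx2 : ((g • x).2 : unitInterval) = x.2 := rfl
      have hx1 : (g • x).1 = g • x.1 := rfl
      rw [hx1, hx2]
      split_ifs with h
      · rw [hsmulU, hFG]
      · rw [hsmulU, hFG]
    have hpcH : ∀ x : U × unitInterval, p (c x) = H (x, 0) := by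
      intro x
      rw [hc, hH]
      simp only [Set.Icc.coe_zero, sub_zero, mul_one]
      have : q ((τ x.2 : ℝ)) = τ x.2 := Set.projIcc_val zero_le_one _
      rw [this]
      split_ifs with h
      · rw [hτ₁ x.2 h]
      · rw [hτ₂ x.2 (le_of_not_ge h)]
        exact (hFp x.1 (σ₂ x.2)).symm
    obtain ⟨L, hLc, hLG, hLp, hL0⟩ := hfib (U × unitInterval) inferInstance inferInstance
      inferInstance H c hHc hHG hcc hcG hpcH
    -- endpoint values of the reparametrizations
    have hφ0 : φ 0 = 0 := by
      rw [hφ]; simp only [Set.Icc.coe_zero, mul_zero, zero_sub]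
      rw [hqdef]
      exact Set.projIcc_of_le_left zero_le_one (by norm_num)
    have hφ1 : φ 1 = 1 := by
      rw [hφ]; simp only [Set.Icc.coe_one, mul_one]
      rw [hqdef]
      exact Set.projIcc_of_right_le zero_le_one (by norm_num)
    have hψ0 : ψ 0 = 0 := by
      rw [hψ]; simp only [Set.Icc.coe_zero, mul_zero, sub_zero]
      rw [hqdef]
      rw [min_eq_left (by norm_num)]
      exact Set.projIcc_left zero_le_one
    have hψ1 : ψ 1 = 0 := by
      rw [hψ]; simp only [Set.Icc.coe_one, mul_one]
      rw [hqdef]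
      rw [min_eq_right (by norm_num)]
      norm_num
    have hc0 : ∀ u : U, c (u, 0) = u.1.1 := by
      intro u
      rw [hc]
      simp only [Set.Icc.coe_zero]
      rw [if_pos (by norm_num)]
      have : σ₁ (0 : unitInterval) = 0 := by
        rw [hσ₁]; simp only [Set.Icc.coe_zero, mul_zero]
        rw [hq0]
      rw [this, hF0]
    have hc1 : ∀ u : U, c (u, 1) = u.1.2 := by
      intro u
      rw [hc]
      simp only [Set.Icc.coe_one]
      rw [if_neg (by norm_num)]
      have : σ₂ (1 : unitInterval) = 0 := by
        rw [hσ₂]; simp only [Set.Icc.coe_one, mul_one]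
        norm_num
        rw [hq0]
      rw [this, hF0]
    -- the section
    have hKc : Continuous (fun x : U × unitInterval => L ((x.1, φ x.2), ψ x.2)) := by
      apply hLc.comp
      exact ((continuous_fst.prodMk (hφc.comp continuous_snd)).prodMk
        (hψc.comp continuous_snd))
    refine ⟨fun u => ⟨fun t => L ((u, φ t), ψ t),
        hKc.comp ((Continuous.prodMk continuous_const continuous_id))⟩, ?_, ?_, ?_, ?_⟩
    · exact (ContinuousMap.curry ⟨_, hKc⟩).continuous
    · -- each path lies in a single fibre
      intro u
      refine ⟨p u.1.1, fun t => ?_⟩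
      show p (L ((u, φ t), ψ t)) = p u.1.1
      rw [hLp]
      rw [hH]
      simp only
      have key : q ((τ (φ t) : ℝ) * (1 - (ψ t : ℝ))) = 0 := by
        rcases le_or_gt (t : ℝ) (1 / 3) with h1 | h1
        · have hφt : φ t = 0 := by
            rw [hφ, hqdef]
            simp only
            exact Set.projIcc_of_le_left zero_le_one (by linarith)
          have hτ0 : τ (0 : unitInterval) = 0 := by
            rw [hτ]
            simp only [Set.Icc.coe_zero, mul_zero]
            rw [min_eq_left (by norm_num), hq0]
          rw [hφt, hτ0]
          simp only [Set.Icc.coe_zero, zero_mul]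
          exact hq0
        · rcases le_or_gt (2 / 3) (t : ℝ) with h2 | h2
          · have hφt : φ t = 1 := by
              rw [hφ, hqdef]
              simp only
              exact Set.projIcc_of_right_le zero_le_one (by linarith)
            have hτ1' : τ (1 : unitInterval) = 0 := by
              rw [hτ]
              simp only [Set.Icc.coe_one, mul_one]
              rw [min_eq_right (by norm_num)]
              norm_num
              exact hq0
            rw [hφt, hτ1']
            simp only [Set.Icc.coe_zero, zero_mul]
            exact hq0
          · have hψt : ψ t = 1 := by
              rw [hψ, hqdef]
              simp only
              apply Set.projIcc_of_right_le zero_le_one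
              apply le_min <;> linarith
            rw [hψt]
            simp only [Set.Icc.coe_one, sub_self, mul_zero]
            exact hq0
      rw [key]
      rw [hF0]
    · -- endpoints
      intro u
      constructor
      · show L ((u, φ 0), ψ 0) = u.1.1
        rw [hφ0, hψ0, hL0, hc0]
      · show L ((u, φ 1), ψ 1) = u.1.2
        rw [hφ1, hψ1, hL0, hc1]
    · -- equivariance
      intro g u t
      show L ((⟨(g • u.1.1, g • u.1.2), hUinv g u.1 u.2⟩, φ t), ψ t)
        = g • L ((u, φ t), ψ t)
      exact hLG g (u, φ t) (ψ t)
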